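/- Monotone winding of hyperbolic rotation (infinitesimal version): for any two distinct points x, y in the open unit disk 𝔻 of ℂ, the derivative at α = 0 of g(α) = arg(f(e^{iα} y) − f(e^{iα} x)) is strictly positive, where f(z) = i(1−z)/(1+z) maps 𝔻 conformally onto the upper half plane. Consequently, g'(0) = 1 − d/dα[arg(1 + e^{iα}x)]|₀ − d/dα[arg(1 + e^{iα}y)]|₀ > 0. -/

import Mathlib

open Complex in
private lemma stmt14_aux_ne (z : ℂ) (hz : ‖z‖ < 1) : (1 : ℂ) + z ≠ 0 := by
  intro h
  have : z = -1 := by linear_combination h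
  simp [this] at hz

open Complex in
private lemma stmt14_aux_re (z : ℂ) (hz : ‖z‖ < 1) : (z / (1 + z)).re < 1 / 2 := by
  have h1 : z.re * z.re + z.im * z.im < 1 := by
    have := Complex.sq_norm z
    rw [Complex.normSq_apply] at this
    nlinarith [hz, norm_nonneg z, this]
  have h2 : 0 < Complex.normSq (1 + z) := by
    simpa [Complex.normSq_pos] using stmt14_aux_ne z hz
  rw [Complex.div_re]
  rw [← add_div, div_lt_iff₀ h2]
  simp only [Complex.add_re, Complex.add_im, Complex.one_re, Complex.one_im,
    Complex.normSq_apply]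
  nlinarith [h1, h2]

set_option maxHeartbeats 1000000 in
/-- Monotone winding of hyperbolic rotation: for distinct `x`, `y` in the open unit disk
and `f z = i(1-z)/(1+z)`, the curve `c(α) = f(e^{iα} y) - f(e^{iα} x)` is differentiable
at `0` and the derivative of its (continuous) argument at `α = 0`, namely
`Im (c'(0)/c(0))`, equals `1 - Re(x/(1+x)) - Re(y/(1+y))` and is strictly positive. -/
theorem stmt14 (x y : ℂ) (hx : ‖x‖ < 1) (hy : ‖y‖ < 1) (hxy : x ≠ y) :
    ∃ c' : ℂ,
      HasDerivAt (fun α : ℝ =>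
          Complex.I * (1 - Complex.exp ((α : ℂ) * Complex.I) * y)
              / (1 + Complex.exp ((α : ℂ) * Complex.I) * y)
            - Complex.I * (1 - Complex.exp ((α : ℂ) * Complex.I) * x)
              / (1 + Complex.exp ((α : ℂ) * Complex.I) * x)) c' 0 ∧
      (c' / (Complex.I * (1 - y) / (1 + y) - Complex.I * (1 - x) / (1 + x))).im
        = 1 - (x / (1 + x)).re - (y / (1 + y)).re ∧
      0 < (c' / (Complex.I * (1 - y) / (1 + y) - Complex.I * (1 - x) / (1 + x))).im := by
  have hxne := stmt14_aux_ne x hx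
  have hyne := stmt14_aux_ne y hy
  -- the derivative
  have h1 : HasDerivAt (fun α : ℝ => (α : ℂ) * Complex.I) Complex.I 0 := by
    simpa using (Complex.ofRealCLM.hasDerivAt (x := (0:ℝ))).mul_const Complex.I
  have he : HasDerivAt (fun α : ℝ => Complex.exp ((α : ℂ) * Complex.I)) Complex.I 0 := by
    simpa using h1.cexp
  have part : ∀ z : ℂ, (1 : ℂ) + z ≠ 0 → HasDerivAt (fun α : ℝ =>
      Complex.I * (1 - Complex.exp ((α : ℂ) * Complex.I) * z)
        / (1 + Complex.exp ((α : ℂ) * Complex.I) * z)) (2 * z / (1 + z) ^ 2) 0 := by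
    intro z hz
    have hez : HasDerivAt (fun α : ℝ => Complex.exp ((α : ℂ) * Complex.I) * z)
        (Complex.I * z) 0 := he.mul_const z
    have hnum : HasDerivAt (fun α : ℝ =>
        Complex.I * (1 - Complex.exp ((α : ℂ) * Complex.I) * z))
        (Complex.I * -(Complex.I * z)) 0 := by
      simpa using (((hasDerivAt_const (0:ℝ) (1:ℂ)).sub hez).const_mul Complex.I)
    have hden : HasDerivAt (fun α : ℝ =>
        (1:ℂ) + Complex.exp ((α : ℂ) * Complex.I) * z) (Complex.I * z) 0 := by
      exact hez.const_add (1:ℂ)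
    have hden0 : (1:ℂ) + Complex.exp ((0:ℝ) * Complex.I) * z ≠ 0 := by
      simpa using hz
    have := hnum.div hden hden0
    refine this.congr_deriv (Eq.symm ?_)
    simp only [Complex.ofReal_zero, zero_mul, Complex.exp_zero, one_mul]
    field_simp
    linear_combination (2*z) * Complex.I_sq
  have hderiv := (part y hyne).sub (part x hxne)
  have hd : (1 - y) / (1 + y) - (1 - x) / (1 + x) ≠ 0 := by
    intro h
    apply hxy
    field_simp at h
    linear_combination h / 2
  have hfac : Complex.I * (1 - y) / (1 + y) - Complex.I * (1 - x) / (1 + x)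
      = Complex.I * ((1 - y) / (1 + y) - (1 - x) / (1 + x)) := by
    field_simp
  have heq : (2 * y / (1 + y) ^ 2 - 2 * x / (1 + x) ^ 2)
      = -(1 - x / (1 + x) - y / (1 + y)) * ((1 - y) / (1 + y) - (1 - x) / (1 + x)) := by
    field_simp
    ring
  have h3 : (2 * y / (1 + y) ^ 2 - 2 * x / (1 + x) ^ 2)
      / (Complex.I * (1 - y) / (1 + y) - Complex.I * (1 - x) / (1 + x))
      = Complex.I * (1 - x / (1 + x) - y / (1 + y)) := by
    rw [hfac, div_eq_iff (mul_ne_zero Complex.I_ne_zero hd)]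
    linear_combination heq - ((1 - x / (1 + x) - y / (1 + y))
      * ((1 - y) / (1 + y) - (1 - x) / (1 + x))) * Complex.I_sq
  refine ⟨_, hderiv, ?_, ?_⟩
  · rw [h3]
    simp only [Complex.mul_im, Complex.I_re, Complex.I_im, zero_mul, one_mul, zero_add,
      Complex.sub_re, Complex.one_re]
  · rw [h3]
    simp only [Complex.mul_im, Complex.I_re, Complex.I_im, zero_mul, one_mul, zero_add,
      Complex.sub_re, Complex.one_re]
    have hax := stmt14_aux_re x hx
    have hay := stmt14_aux_re y hy
    linarith
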